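/- The probability measure on (0,1) with density f*(x) = 1/(π·√(x(1−x))) (the Beta(1/2,1/2) distribution) is invariant under the logistic map f₄(x) = 4x(1−x): if X has density f*, then 4X(1−X) also has density f*. Equivalently, for every measurable A ⊆ (0,1), ∫_{f₄⁻¹(A)} f*(x) dx = ∫_A f*(x) dx. -/
import Mathlib

open Set MeasureTheory Real

lemma fstar_integrable :
    IntegrableOn (fun x : ℝ => 1 / (π * Real.sqrt (x * (1 - x)))) (Ioo (0:ℝ) 1) := by
  have hmeas : Measurable (fun x : ℝ => 1 / (π * Real.sqrt (x * (1 - x)))) := by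
    fun_prop
  have h1 : IntegrableOn (fun x : ℝ => 1 / (π * Real.sqrt (x * (1 - x)))) (Ioc (0:ℝ) (1/2)) := by
    have hb : IntegrableOn (fun x : ℝ => Real.sqrt 2 / π * x ^ (-(1/2) : ℝ)) (Ioc (0:ℝ) (1/2)) := by
      have := (intervalIntegral.intervalIntegrable_rpow' (a := 0) (b := 1/2) (r := (-(1/2) : ℝ))
        (by norm_num)).const_mul (Real.sqrt 2 / π)
      rwa [intervalIntegrable_iff_integrableOn_Ioc_of_le (by norm_num)] at this
    refine Integrable.mono hb hmeas.aestronglyMeasurable.restrict ?_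
    rw [ae_restrict_iff' measurableSet_Ioc]
    filter_upwards with x hx
    obtain ⟨hx0, hx2⟩ := hx
    have h1x : 0 < 1 - x := by linarith
    have hxx : 0 < x * (1 - x) := by positivity
    have hs : 0 < Real.sqrt (x * (1 - x)) := Real.sqrt_pos.2 hxx
    have hsx : 0 < Real.sqrt x := Real.sqrt_pos.2 hx0
    have key : Real.sqrt x ≤ Real.sqrt 2 * Real.sqrt (x * (1 - x)) := by
      rw [← Real.sqrt_mul (by norm_num)]
      exact Real.sqrt_le_sqrt (by nlinarith)
    rw [Real.norm_eq_abs, Real.norm_eq_abs, abs_of_nonneg (by positivity),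
      abs_of_nonneg (by positivity), Real.rpow_neg hx0.le,
      ← Real.sqrt_eq_rpow,
      show Real.sqrt 2 / π * (Real.sqrt x)⁻¹ = Real.sqrt 2 / (π * Real.sqrt x) by ring,
      div_le_div_iff₀ (by positivity) (by positivity)]
    nlinarith [mul_le_mul_of_nonneg_left key pi_pos.le]
  have h2 : IntegrableOn (fun x : ℝ => 1 / (π * Real.sqrt (x * (1 - x)))) (Ioo (1/2 : ℝ) 1) := by
    have hb : IntegrableOn (fun x : ℝ => Real.sqrt 2 / π * (1 - x) ^ (-(1/2) : ℝ))
        (Ioo (1/2 : ℝ) 1) := by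
      have h0 : IntervalIntegrable (fun x : ℝ => x ^ (-(1/2) : ℝ)) volume 0 (1/2) :=
        intervalIntegral.intervalIntegrable_rpow' (by norm_num)
      have h1' := (h0.comp_sub_left 1).const_mul (Real.sqrt 2 / π)
      have : IntegrableOn (fun x : ℝ => Real.sqrt 2 / π * (1 - x) ^ (-(1/2) : ℝ))
          (Ioc (1/2 : ℝ) 1) := by
        have h2' : IntervalIntegrable (fun x : ℝ => Real.sqrt 2 / π * (1 - x) ^ (-(1/2) : ℝ))
            volume (1/2) 1 := by
          norm_num at h1'
          exact h1'.symm
        rwa [intervalIntegrable_iff_integrableOn_Ioc_of_le (by norm_num)] at h2'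
      exact this.mono_set Ioo_subset_Ioc_self
    refine Integrable.mono hb hmeas.aestronglyMeasurable.restrict ?_
    rw [ae_restrict_iff' measurableSet_Ioo]
    filter_upwards with x hx
    obtain ⟨hx2, hx1⟩ := hx
    have hx0 : 0 < x := by linarith
    have h1x : 0 < 1 - x := by linarith
    have hxx : 0 < x * (1 - x) := by positivity
    have hs : 0 < Real.sqrt (x * (1 - x)) := Real.sqrt_pos.2 hxx
    have hsx : 0 < Real.sqrt (1 - x) := Real.sqrt_pos.2 h1x
    have key : Real.sqrt (1 - x) ≤ Real.sqrt 2 * Real.sqrt (x * (1 - x)) := by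
      rw [← Real.sqrt_mul (by norm_num)]
      exact Real.sqrt_le_sqrt (by nlinarith)
    rw [Real.norm_eq_abs, Real.norm_eq_abs, abs_of_nonneg (by positivity),
      abs_of_nonneg (by positivity), Real.rpow_neg h1x.le,
      ← Real.sqrt_eq_rpow,
      show Real.sqrt 2 / π * (Real.sqrt (1 - x))⁻¹ = Real.sqrt 2 / (π * Real.sqrt (1 - x)) by ring,
      div_le_div_iff₀ (by positivity) (by positivity)]
    nlinarith [mul_le_mul_of_nonneg_left key pi_pos.le]
  refine (h1.union h2).mono_set ?_
  intro x hx
  rcases le_or_gt x (1/2) with h | h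
  · exact Or.inl ⟨hx.1, h⟩
  · exact Or.inr ⟨h, hx.2⟩

theorem beta_invariant_under_logistic
    (A : Set ℝ) (hA : MeasurableSet A) (hAsub : A ⊆ Ioo (0:ℝ) 1) :
    ∫ x in ((fun x : ℝ => 4 * x * (1 - x)) ⁻¹' A ∩ Ioo (0:ℝ) 1),
        1 / (π * Real.sqrt (x * (1 - x)))
      = ∫ x in A, 1 / (π * Real.sqrt (x * (1 - x))) := by
  set T : ℝ → ℝ := fun x => 4 * x * (1 - x) with hT
  set g1 : ℝ → ℝ := fun y => (1 - Real.sqrt (1 - y)) / 2 with hg1def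
  set g2 : ℝ → ℝ := fun y => (1 + Real.sqrt (1 - y)) / 2 with hg2def
  set F : ℝ → ℝ := fun x => 1 / (π * Real.sqrt (x * (1 - x))) with hFdef
  -- basic facts for y ∈ A
  have hyfacts : ∀ y ∈ A, 0 < y ∧ y < 1 ∧ 0 < Real.sqrt (1 - y) ∧ Real.sqrt (1 - y) < 1 ∧
      Real.sqrt (1 - y) ^ 2 = 1 - y := by
    intro y hy
    obtain ⟨hy0, hy1⟩ := hAsub hy
    have h1y : 0 < 1 - y := by linarith
    have hs0 : 0 < Real.sqrt (1 - y) := Real.sqrt_pos.2 h1y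
    have hsq : Real.sqrt (1 - y) ^ 2 = 1 - y := Real.sq_sqrt h1y.le
    have hs1 : Real.sqrt (1 - y) < 1 := by nlinarith
    exact ⟨hy0, hy1, hs0, hs1, hsq⟩
  -- set identities
  have E1 : T ⁻¹' A ∩ Ioo (0:ℝ) (1/2) = g1 '' A := by
    ext x
    constructor
    · rintro ⟨hxA, hx0, hx2⟩
      refine ⟨T x, hxA, ?_⟩
      have hsq : Real.sqrt (1 - T x) = 1 - 2 * x := by
        rw [show 1 - T x = (1 - 2*x)^2 by simp only [hT]; ring]
        exact Real.sqrt_sq (by linarith)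
      simp only [hg1def, hsq]; ring
    · rintro ⟨y, hy, rfl⟩
      obtain ⟨hy0, hy1, hs0, hs1, hsq⟩ := hyfacts y hy
      refine ⟨?_, ?_, ?_⟩
      · show T (g1 y) ∈ A
        have : T (g1 y) = y := by
          simp only [hT, hg1def]
          nlinarith [hsq]
        rwa [this]
      · simp only [hg1def]; linarith
      · simp only [hg1def]; linarith
  have E2 : T ⁻¹' A ∩ Ioo (1/2 : ℝ) 1 = g2 '' A := by
    ext x
    constructor
    · rintro ⟨hxA, hx2, hx1⟩
      refine ⟨T x, hxA, ?_⟩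
      have hsq : Real.sqrt (1 - T x) = 2 * x - 1 := by
        rw [show 1 - T x = (2*x - 1)^2 by simp only [hT]; ring]
        exact Real.sqrt_sq (by linarith)
      simp only [hg2def, hsq]; ring
    · rintro ⟨y, hy, rfl⟩
      obtain ⟨hy0, hy1, hs0, hs1, hsq⟩ := hyfacts y hy
      refine ⟨?_, ?_, ?_⟩
      · show T (g2 y) ∈ A
        have : T (g2 y) = y := by
          simp only [hT, hg2def]
          nlinarith [hsq]
        rwa [this]
      · simp only [hg2def]; linarith
      · simp only [hg2def]; linarith
  have E0 : T ⁻¹' A ∩ Ioo (0:ℝ) 1 =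
      (T ⁻¹' A ∩ Ioo (0:ℝ) (1/2)) ∪ (T ⁻¹' A ∩ Ioo (1/2 : ℝ) 1) := by
    ext x
    constructor
    · rintro ⟨hxA, hx0, hx1⟩
      have hne : x ≠ 1/2 := by
        intro h
        subst h
        have hT1 : T (1/2 : ℝ) = 1 := by simp only [hT]; norm_num
        have hmem : (1:ℝ) ∈ A := by rw [← hT1]; exact hxA
        exact absurd (hAsub hmem).2 (lt_irrefl 1)
      rcases lt_or_gt_of_ne hne with h | h
      · exact Or.inl ⟨hxA, hx0, h⟩
      · exact Or.inr ⟨hxA, h, hx1⟩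
    · rintro (⟨hxA, hx0, hx2⟩ | ⟨hxA, hx2, hx1⟩)
      · exact ⟨hxA, hx0, by linarith⟩
      · exact ⟨hxA, by linarith, hx1⟩
  -- measurability
  have hTmeas : Measurable T := by fun_prop
  have hm1 : MeasurableSet (T ⁻¹' A ∩ Ioo (0:ℝ) (1/2)) :=
    (hTmeas hA).inter measurableSet_Ioo
  have hm2 : MeasurableSet (T ⁻¹' A ∩ Ioo (1/2:ℝ) 1) :=
    (hTmeas hA).inter measurableSet_Ioo
  -- integrability
  have hint1 : IntegrableOn F (T ⁻¹' A ∩ Ioo (0:ℝ) (1/2)) :=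
    fstar_integrable.mono_set (fun x hx => ⟨hx.2.1, by have := hx.2.2; linarith⟩)
  have hint2 : IntegrableOn F (T ⁻¹' A ∩ Ioo (1/2:ℝ) 1) :=
    fstar_integrable.mono_set (fun x hx => ⟨by have := hx.2.1; linarith, hx.2.2⟩)
  -- derivatives
  have hderiv : ∀ y ∈ A, HasDerivAt (fun y : ℝ => Real.sqrt (1 - y))
      (1 / (2 * Real.sqrt (1 - y)) * (-1)) y := by
    intro y hy
    obtain ⟨hy0, hy1, hs0, hs1, hsq⟩ := hyfacts y hy
    exact (Real.hasDerivAt_sqrt (by linarith : (1:ℝ) - y ≠ 0)).comp y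
      (by simpa using (hasDerivAt_id y).const_sub 1)
  have hd1 : ∀ y ∈ A, HasDerivWithinAt g1 (1 / (4 * Real.sqrt (1 - y))) A y := by
    intro y hy
    obtain ⟨hy0, hy1, hs0, hs1, hsq⟩ := hyfacts y hy
    have h := ((hderiv y hy).const_sub 1).div_const 2
    have heq : -(1 / (2 * Real.sqrt (1 - y)) * (-1)) / 2 = 1 / (4 * Real.sqrt (1 - y)) := by
      field_simp
      ring
    rw [heq] at h
    exact h.hasDerivWithinAt
  have hd2 : ∀ y ∈ A, HasDerivWithinAt g2 (-(1 / (4 * Real.sqrt (1 - y)))) A y := by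
    intro y hy
    obtain ⟨hy0, hy1, hs0, hs1, hsq⟩ := hyfacts y hy
    have h := ((hderiv y hy).const_add 1).div_const 2
    have heq : (1 / (2 * Real.sqrt (1 - y)) * (-1)) / 2 = -(1 / (4 * Real.sqrt (1 - y))) := by
      field_simp
      ring
    rw [heq] at h
    exact h.hasDerivWithinAt
  -- injectivity
  have hinj1 : InjOn g1 A := by
    intro a ha b hb h
    simp only [hg1def] at h
    have h' : Real.sqrt (1 - a) = Real.sqrt (1 - b) := by linarith
    have := (Real.sqrt_inj (by have h := hAsub ha; linarith [h.2]) (by have h := hAsub hb; linarith [h.2])).1 h'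
    linarith
  have hinj2 : InjOn g2 A := by
    intro a ha b hb h
    simp only [hg2def] at h
    have h' : Real.sqrt (1 - a) = Real.sqrt (1 - b) := by linarith
    have := (Real.sqrt_inj (by have h := hAsub ha; linarith [h.2]) (by have h := hAsub hb; linarith [h.2])).1 h'
    linarith
  -- change of variables
  have hc1 : ∫ x in g1 '' A, F x = ∫ y in A, |1 / (4 * Real.sqrt (1 - y))| • F (g1 y) :=
    integral_image_eq_integral_abs_deriv_smul hA hd1 hinj1 F
  have hc2 : ∫ x in g2 '' A, F x = ∫ y in A, |(-(1 / (4 * Real.sqrt (1 - y))))| • F (g2 y) :=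
    integral_image_eq_integral_abs_deriv_smul hA hd2 hinj2 F
  -- pointwise simplification
  have hptwise : ∀ i : Bool, ∀ y ∈ A,
      |1 / (4 * Real.sqrt (1 - y))| • F ((if i then g1 else g2) y) = 1 / 2 * F y := by
    intro i y hy
    obtain ⟨hy0, hy1, hs0, hs1, hsq⟩ := hyfacts y hy
    have hprod : (if i then g1 else g2) y * (1 - (if i then g1 else g2) y) = y / 4 := by
      cases i <;> simp only [if_true, if_false, hg1def, hg2def, Bool.false_eq_true] <;> nlinarith
    have h4 : Real.sqrt (y / 4) = Real.sqrt y / 2 := by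
      rw [show y / 4 = y * (1/2)^2 by ring, Real.sqrt_mul hy0.le, Real.sqrt_sq (by norm_num : (0:ℝ) ≤ 1/2)]
      ring
    have hsy : 0 < Real.sqrt y := Real.sqrt_pos.2 hy0
    rw [abs_of_nonneg (by positivity), smul_eq_mul]
    simp only [hFdef, hprod, h4, Real.sqrt_mul hy0.le]
    field_simp
    ring
  have hp1 : ∫ y in A, |1 / (4 * Real.sqrt (1 - y))| • F (g1 y)
      = ∫ y in A, 1 / 2 * F y :=
    setIntegral_congr_fun hA (fun y hy => by simpa using hptwise true y hy)
  have hp2 : ∫ y in A, |(-(1 / (4 * Real.sqrt (1 - y))))| • F (g2 y)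
      = ∫ y in A, 1 / 2 * F y := by
    refine setIntegral_congr_fun hA (fun y hy => ?_)
    rw [abs_neg]
    simpa using hptwise false y hy
  calc ∫ x in (T ⁻¹' A ∩ Ioo (0:ℝ) 1), F x
      = (∫ x in (T ⁻¹' A ∩ Ioo (0:ℝ) (1/2)), F x)
        + ∫ x in (T ⁻¹' A ∩ Ioo (1/2:ℝ) 1), F x := by
        rw [E0]
        have hdisj : Disjoint (T ⁻¹' A ∩ Ioo (0:ℝ) (1/2)) (T ⁻¹' A ∩ Ioo (1/2:ℝ) 1) := by
          rw [Set.disjoint_left]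
          rintro x ⟨_, _, h1⟩ ⟨_, h2, _⟩
          linarith
        exact setIntegral_union hdisj hm2 hint1 hint2
    _ = (∫ y in A, 1 / 2 * F y) + ∫ y in A, 1 / 2 * F y := by
        rw [E1, E2, hc1, hc2, hp1, hp2]
    _ = ∫ x in A, F x := by
        rw [integral_const_mul]
        ring
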